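/- arXiv:2504.17955 — 4 statements merged into one kernel-verified Lean document; each statement's English description precedes it below -/
import Mathlib

section
/- If 0 < ρ < 1 and the sum over k ≥ 1 of arcsin(ρ^k) is at least π, then disks of radius ρ^k (for k = 1, 2, ...) placed with their diameters as chords of the unit circle can together cover the entire circumference of the unit circle; conversely, if the sum is less than π, they cannot cover the full circumference. -/
open Real

/-- If `∑_{k≥1} arcsin (ρ^k) ≥ π`, then closed arcs of central angle `2 arcsin (ρ^k)`
(the arcs covered by disks of radius `ρ^k` placed with diameters as chords of the
unit circle) can be placed to cover the whole circumference (parameterized by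
central angle in `[0, 2π)`); if the sum is `< π`, no placement covers it. -/
theorem cover_circumference_iff_angle_sum (ρ : ℝ) (hρ0 : 0 < ρ) (hρ1 : ρ < 1) :
    ((Real.pi ≤ ∑' k : ℕ, Real.arcsin (ρ ^ (k + 1))) →
      ∃ a : ℕ → ℝ, Set.Ico (0 : ℝ) (2 * Real.pi) ⊆
        ⋃ k : ℕ, Set.Icc (a k) (a k + 2 * Real.arcsin (ρ ^ (k + 1)))) ∧
    ((∑' k : ℕ, Real.arcsin (ρ ^ (k + 1))) < Real.pi →
      ¬ ∃ a : ℕ → ℝ, Set.Ico (0 : ℝ) (2 * Real.pi) ⊆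
        ⋃ k : ℕ, Set.Icc (a k) (a k + 2 * Real.arcsin (ρ ^ (k + 1)))) := by
  classical
  have hπ := Real.pi_pos
  set f : ℕ → ℝ := fun k => Real.arcsin (ρ ^ (k + 1)) with hf
  have hpow : ∀ k : ℕ, 0 ≤ ρ ^ (k + 1) := fun k => pow_nonneg hρ0.le _
  have hpow1 : ∀ k : ℕ, ρ ^ (k + 1) ≤ 1 := fun k => pow_le_one₀ hρ0.le hρ1.le
  have hf0 : ∀ k, 0 ≤ f k := fun k => Real.arcsin_nonneg.2 (hpow k)
  have hfle : ∀ k, f k ≤ π / 2 * ρ ^ (k + 1) := by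
    intro k
    have ht0 : 0 ≤ f k := hf0 k
    have ht2 : f k ≤ π / 2 := Real.arcsin_le_pi_div_two _
    have hs : Real.sin (f k) = ρ ^ (k + 1) :=
      Real.sin_arcsin (by linarith [hpow k]) (hpow1 k)
    have hms := Real.mul_le_sin ht0 ht2
    rw [hs] at hms
    have h1 : 2 / π * f k ≤ ρ ^ (k + 1) := hms
    have h2 : f k = π / 2 * (2 / π * f k) := by field_simp
    rw [h2]
    have : (0:ℝ) < π / 2 := by linarith
    nlinarith
  have hsum : Summable f := by
    refine Summable.of_nonneg_of_le hf0 hfle ?_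
    have h1 : Summable (fun k : ℕ => (π / 2 * ρ ^ k) * ρ) :=
      ((summable_geometric_of_lt_one hρ0.le hρ1).mul_left (π / 2)).mul_right ρ
    refine h1.congr fun k => by ring
  constructor
  · intro hge
    refine ⟨fun k => 2 * ∑ j ∈ Finset.range k, f j, ?_⟩
    intro x hx
    obtain ⟨hx0, hx2⟩ := hx
    have htend : Filter.Tendsto (fun n => ∑ j ∈ Finset.range n, f j)
        Filter.atTop (nhds (∑' k, f k)) := hsum.hasSum.tendsto_sum_nat
    have hlt : x / 2 < ∑' k, f k := by linarith
    obtain ⟨N, hN⟩ := (htend.eventually (eventually_gt_nhds hlt)).exists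
    have hPN : x < 2 * ∑ j ∈ Finset.range N, f j := by linarith
    have hex : ∃ n, x < 2 * ∑ j ∈ Finset.range n, f j := ⟨N, hPN⟩
    set n0 := Nat.find hex with hn0
    have hspec : x < 2 * ∑ j ∈ Finset.range n0, f j := Nat.find_spec hex
    have hn0ne : n0 ≠ 0 := by
      intro h
      rw [h] at hspec
      simp at hspec
      linarith
    obtain ⟨k, hk⟩ := Nat.exists_eq_succ_of_ne_zero hn0ne
    have hmin : ¬ (x < 2 * ∑ j ∈ Finset.range k, f j) :=
      Nat.find_min hex (by omega)
    push_neg at hmin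
    rw [hk, Finset.sum_range_succ] at hspec
    refine Set.mem_iUnion.2 ⟨k, ?_⟩
    refine ⟨hmin, ?_⟩
    show x ≤ 2 * ∑ j ∈ Finset.range k, f j + 2 * f k
    linarith
  · intro hlt ⟨a, hsub⟩
    have hμ := MeasureTheory.measure_mono (μ := MeasureTheory.volume) hsub
    have h1 : MeasureTheory.volume (Set.Ico (0:ℝ) (2 * π)) = ENNReal.ofReal (2 * π) := by
      rw [Real.volume_Ico]; norm_num
    have h2 : MeasureTheory.volume (⋃ k : ℕ, Set.Icc (a k) (a k + 2 * f k)) ≤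
        ∑' k : ℕ, ENNReal.ofReal (2 * f k) := by
      refine (MeasureTheory.measure_iUnion_le _).trans ?_
      refine ENNReal.tsum_le_tsum fun k => ?_
      rw [Real.volume_Icc]
      simp
    have h3 : ∑' k : ℕ, ENNReal.ofReal (2 * f k) = ENNReal.ofReal (∑' k, 2 * f k) :=
      (ENNReal.ofReal_tsum_of_nonneg (fun k => by linarith [hf0 k]) (hsum.mul_left 2)).symm
    have h4 : (∑' k, 2 * f k) = 2 * ∑' k, f k := hsum.tsum_mul_left 2
    have h5 : ENNReal.ofReal (2 * π) ≤ ENNReal.ofReal (2 * ∑' k, f k) := by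
      calc ENNReal.ofReal (2 * π) = MeasureTheory.volume (Set.Ico (0:ℝ) (2 * π)) := h1.symm
        _ ≤ _ := hμ
        _ ≤ ∑' k : ℕ, ENNReal.ofReal (2 * f k) := h2
        _ = ENNReal.ofReal (2 * ∑' k, f k) := by rw [h3, h4]
    have h6 : 2 * π ≤ 2 * ∑' k, f k :=
      (ENNReal.ofReal_le_ofReal_iff (mul_nonneg (by norm_num) (tsum_nonneg hf0))).1 h5
    linarith
end

section
/- There exists a unique ρ ∈ (0,1) such that ∑_{k=1}^{∞} arcsin(ρ^k) = π, and this ρ satisfies 0.749 < ρ < 0.75. Consequently, any progressive shrinking strategy with probe radii ρ₁^k covering the circle's perimeter requires ρ₁ ≥ 0.749, giving a lower bound coefficient -1/log₂(ρ₁) > 2.4. -/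
open Real


private lemma auxNonneg (F F' : ℝ → ℝ) (hd : ∀ x, HasDerivAt F (F' x) x)
    (h0 : F 0 = 0) (hF' : ∀ x, 0 < x → 0 ≤ F' x) : ∀ y, 0 ≤ y → 0 ≤ F y := by
  intro y hy
  have hmono : MonotoneOn F (Set.Ici (0:ℝ)) := by
    apply monotoneOn_of_deriv_nonneg (convex_Ici 0)
    · exact fun x _ => (hd x).continuousAt.continuousWithinAt
    · intro x _
      exact (hd x).differentiableAt.differentiableWithinAt
    · intro x hx
      rw [interior_Ici] at hx
      rw [(hd x).deriv]
      exact hF' x hx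
  have h := hmono Set.self_mem_Ici (Set.mem_Ici.2 hy) hy
  rw [h0] at h
  exact h

private lemma poly_deriv (a b c d e : ℝ) :
    ∀ x : ℝ, HasDerivAt (fun x : ℝ => a*x + b*x^3 + c*x^5 + d*x^7 + e*x^9)
      (a + 3*b*x^2 + 5*c*x^4 + 7*d*x^6 + 9*e*x^8) x := by
  intro x
  have h1 := (hasDerivAt_pow 3 x).const_mul b
  have h3 := (hasDerivAt_pow 5 x).const_mul c
  have h5 := (hasDerivAt_pow 7 x).const_mul d
  have h7 := (hasDerivAt_pow 9 x).const_mul e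
  have h0 := (hasDerivAt_id x).const_mul a
  have := (((h0.add h1).add h3).add h5).add h7
  refine this.congr_deriv ?_
  push_cast
  ring

private lemma poly_deriv' (c0 a b c d e : ℝ) :
    ∀ x : ℝ, HasDerivAt (fun x : ℝ => c0 + a*x^2 + b*x^4 + c*x^6 + d*x^8 + e*x^10)
      (2*a*x + 4*b*x^3 + 6*c*x^5 + 8*d*x^7 + 10*e*x^9) x := by
  intro x
  have h1 := (hasDerivAt_pow 2 x).const_mul a
  have h3 := (hasDerivAt_pow 4 x).const_mul b
  have h5 := (hasDerivAt_pow 6 x).const_mul c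
  have h7 := (hasDerivAt_pow 8 x).const_mul d
  have h9 := (hasDerivAt_pow 10 x).const_mul e
  have := (((((hasDerivAt_const x c0).add h1).add h3).add h5).add h7).add h9
  refine this.congr_deriv ?_
  push_cast
  ring

private lemma cos_lb2 : ∀ y : ℝ, 0 ≤ y → 1 - y^2/2 ≤ Real.cos y := by
  have h := auxNonneg (fun x => Real.cos x - (1 + (-1/2)*x^2 + 0*x^4 + 0*x^6 + 0*x^8 + 0*x^10))
    (fun x => -Real.sin x - (2*(-1/2)*x + 4*0*x^3 + 6*0*x^5 + 8*0*x^7 + 10*0*x^9))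
    (fun x => (Real.hasDerivAt_cos x).sub (poly_deriv' 1 (-1/2) 0 0 0 0 x))
    (by norm_num)
    (fun x hx => by have := Real.sin_le hx.le; simp; linarith)
  intro y hy
  have := h y hy
  simp at this
  linarith

private lemma sin_lb3 : ∀ y : ℝ, 0 ≤ y → y - y^3/6 ≤ Real.sin y := by
  have h := auxNonneg (fun x => Real.sin x - (1*x + (-1/6)*x^3 + 0*x^5 + 0*x^7 + 0*x^9))
    (fun x => Real.cos x - (1 + 3*(-1/6)*x^2 + 5*0*x^4 + 7*0*x^6 + 9*0*x^8))
    (fun x => (Real.hasDerivAt_sin x).sub (poly_deriv 1 (-1/6) 0 0 0 x))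
    (by norm_num)
    (fun x hx => by have := cos_lb2 x hx.le; simp; nlinarith)
  intro y hy
  have := h y hy
  simp at this
  nlinarith

private lemma cos_ub4 : ∀ y : ℝ, 0 ≤ y → Real.cos y ≤ 1 - y^2/2 + y^4/24 := by
  have h := auxNonneg (fun x => (1 + (-1/2)*x^2 + (1/24)*x^4 + 0*x^6 + 0*x^8 + 0*x^10) - Real.cos x)
    (fun x => (2*(-1/2)*x + 4*(1/24)*x^3 + 6*0*x^5 + 8*0*x^7 + 10*0*x^9) - (-Real.sin x))
    (fun x => (poly_deriv' 1 (-1/2) (1/24) 0 0 0 x).sub (Real.hasDerivAt_cos x))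
    (by norm_num)
    (fun x hx => by have := sin_lb3 x hx.le; simp; nlinarith)
  intro y hy
  have := h y hy
  simp at this
  nlinarith

private lemma sin_ub5 : ∀ y : ℝ, 0 ≤ y → Real.sin y ≤ y - y^3/6 + y^5/120 := by
  have h := auxNonneg (fun x => (1*x + (-1/6)*x^3 + (1/120)*x^5 + 0*x^7 + 0*x^9) - Real.sin x)
    (fun x => (1 + 3*(-1/6)*x^2 + 5*(1/120)*x^4 + 7*0*x^6 + 9*0*x^8) - Real.cos x)
    (fun x => (poly_deriv 1 (-1/6) (1/120) 0 0 x).sub (Real.hasDerivAt_sin x))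
    (by norm_num)
    (fun x hx => by have := cos_ub4 x hx.le; simp; nlinarith)
  intro y hy
  have := h y hy
  simp at this
  nlinarith

private lemma cos_lb6 : ∀ y : ℝ, 0 ≤ y → 1 - y^2/2 + y^4/24 - y^6/720 ≤ Real.cos y := by
  have h := auxNonneg
    (fun x => Real.cos x - (1 + (-1/2)*x^2 + (1/24)*x^4 + (-1/720)*x^6 + 0*x^8 + 0*x^10))
    (fun x => -Real.sin x - (2*(-1/2)*x + 4*(1/24)*x^3 + 6*(-1/720)*x^5 + 8*0*x^7 + 10*0*x^9))
    (fun x => (Real.hasDerivAt_cos x).sub (poly_deriv' 1 (-1/2) (1/24) (-1/720) 0 0 x))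
    (by norm_num)
    (fun x hx => by have := sin_ub5 x hx.le; simp; nlinarith)
  intro y hy
  have := h y hy
  simp at this
  nlinarith

private lemma sin_lb7 : ∀ y : ℝ, 0 ≤ y → y - y^3/6 + y^5/120 - y^7/5040 ≤ Real.sin y := by
  have h := auxNonneg
    (fun x => Real.sin x - (1*x + (-1/6)*x^3 + (1/120)*x^5 + (-1/5040)*x^7 + 0*x^9))
    (fun x => Real.cos x - (1 + 3*(-1/6)*x^2 + 5*(1/120)*x^4 + 7*(-1/5040)*x^6 + 9*0*x^8))
    (fun x => (Real.hasDerivAt_sin x).sub (poly_deriv 1 (-1/6) (1/120) (-1/5040) 0 x))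
    (by norm_num)
    (fun x hx => by have := cos_lb6 x hx.le; simp; nlinarith)
  intro y hy
  have := h y hy
  simp at this
  nlinarith

private lemma cos_ub8 : ∀ y : ℝ, 0 ≤ y →
    Real.cos y ≤ 1 - y^2/2 + y^4/24 - y^6/720 + y^8/40320 := by
  have h := auxNonneg
    (fun x => (1 + (-1/2)*x^2 + (1/24)*x^4 + (-1/720)*x^6 + (1/40320)*x^8 + 0*x^10) - Real.cos x)
    (fun x => (2*(-1/2)*x + 4*(1/24)*x^3 + 6*(-1/720)*x^5 + 8*(1/40320)*x^7 + 10*0*x^9)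
      - (-Real.sin x))
    (fun x => (poly_deriv' 1 (-1/2) (1/24) (-1/720) (1/40320) 0 x).sub (Real.hasDerivAt_cos x))
    (by norm_num)
    (fun x hx => by have := sin_lb7 x hx.le; simp; nlinarith)
  intro y hy
  have := h y hy
  simp at this
  nlinarith

private lemma sin_ub9 : ∀ y : ℝ, 0 ≤ y →
    Real.sin y ≤ y - y^3/6 + y^5/120 - y^7/5040 + y^9/362880 := by
  have h := auxNonneg
    (fun x => (1*x + (-1/6)*x^3 + (1/120)*x^5 + (-1/5040)*x^7 + (1/362880)*x^9) - Real.sin x)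
    (fun x => (1 + 3*(-1/6)*x^2 + 5*(1/120)*x^4 + 7*(-1/5040)*x^6 + 9*(1/362880)*x^8)
      - Real.cos x)
    (fun x => (poly_deriv 1 (-1/6) (1/120) (-1/5040) (1/362880) x).sub (Real.hasDerivAt_sin x))
    (by norm_num)
    (fun x hx => by have := cos_ub8 x hx.le; simp; nlinarith)
  intro y hy
  have := h y hy
  simp at this
  nlinarith

private lemma arcsin_le_of {x a : ℝ} (ha : 0 ≤ a) (ha' : a ≤ 3/2) (h : x ≤ Real.sin a) :
    Real.arcsin x ≤ a := by
  have hpi : a ≤ π/2 := by nlinarith [Real.pi_gt_three]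
  have := Real.monotone_arcsin h
  rwa [Real.arcsin_sin (by linarith [Real.pi_pos]) hpi] at this

private lemma le_arcsin_of {x a : ℝ} (ha : 0 ≤ a) (ha' : a ≤ 3/2) (h : Real.sin a ≤ x) :
    a ≤ Real.arcsin x := by
  have hpi : a ≤ π/2 := by nlinarith [Real.pi_gt_three]
  have := Real.monotone_arcsin h
  rwa [Real.arcsin_sin (by linarith [Real.pi_pos]) hpi] at this

private lemma self_le_arcsin {x : ℝ} (h0 : 0 ≤ x) (h1 : x ≤ 1) : x ≤ Real.arcsin x :=
  le_arcsin_of h0 (by linarith) (Real.sin_le h0)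

private lemma arcsin_le_two_mul {t : ℝ} (h0 : 0 ≤ t) (h1 : t ≤ 3/4) :
    Real.arcsin t ≤ 2 * t := by
  apply arcsin_le_of (by linarith) (by linarith)
  rcases le_or_gt t (1/2) with h | h
  · have := sin_lb3 (2*t) (by linarith)
    nlinarith [mul_nonneg h0 (by nlinarith : (0:ℝ) ≤ 1 - 4*t^2/3)]
  · have h2 : Real.sin 1 ≤ Real.sin (2*t) := by
      have hmono := Real.strictMonoOn_sin
      rcases eq_or_lt_of_le (show (1:ℝ) ≤ 2*t by linarith) with he | hlt
      · rw [← he]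
      · exact le_of_lt (hmono (by constructor <;> nlinarith [Real.pi_gt_three])
          (by constructor <;> nlinarith [Real.pi_gt_three]) hlt)
    have := sin_lb3 1 (by norm_num)
    nlinarith

private lemma arcsin_tail_ub {x : ℝ} (h0 : 0 ≤ x) (h1 : x ≤ 1/2) :
    Real.arcsin x ≤ x + x^3/6 + x^5/5 := by
  have h3 : x^3 ≤ (1/2)^3 := pow_le_pow_left₀ h0 h1 3
  have h5 : x^5 ≤ (1/2)^5 := pow_le_pow_left₀ h0 h1 5
  apply arcsin_le_of (by positivity) (by norm_num at h3 h5 ⊢; linarith)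
  have hs := sin_lb3 (x + x^3/6 + x^5/5) (by positivity)
  have key : x ≤ (x + x^3/6 + x^5/5) - (x + x^3/6 + x^5/5)^3/6 := by
    nlinarith [pow_nonneg h0 3, pow_nonneg h0 5, sq_nonneg x, sq_nonneg (x^2), sq_nonneg (x^3),
      mul_nonneg (pow_nonneg h0 3) (by nlinarith : (0:ℝ) ≤ 1/4 - x^2),
      mul_nonneg (pow_nonneg h0 5) (by nlinarith : (0:ℝ) ≤ 1/4 - x^2),
      mul_nonneg (pow_nonneg h0 7) (by nlinarith : (0:ℝ) ≤ 1/4 - x^2),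
      mul_nonneg (pow_nonneg h0 9) (by nlinarith : (0:ℝ) ≤ 1/4 - x^2),
      mul_nonneg (pow_nonneg h0 11) (by nlinarith : (0:ℝ) ≤ 1/4 - x^2),
      mul_nonneg (pow_nonneg h0 13) (by nlinarith : (0:ℝ) ≤ 1/4 - x^2)]
  linarith

private lemma summable_S {ρ : ℝ} (h0 : 0 ≤ ρ) (h1 : ρ ≤ 3/4) :
    Summable (fun k : ℕ => Real.arcsin (ρ^(k+1))) := by
  apply Summable.of_nonneg_of_le (fun k => Real.arcsin_nonneg.2 (by positivity))
    (fun k => ?_) ((summable_geometric_of_lt_one h0 (by linarith)).mul_left (2*ρ))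
  have hp0 : (0:ℝ) ≤ ρ^(k+1) := by positivity
  have hp1 : ρ^(k+1) ≤ 3/4 := by
    calc ρ^(k+1) ≤ ρ^1 := pow_le_pow_of_le_one h0 (by linarith) (by omega)
    _ = ρ := pow_one ρ
    _ ≤ 3/4 := h1
  calc Real.arcsin (ρ^(k+1)) ≤ 2*ρ^(k+1) := arcsin_le_two_mul hp0 hp1
  _ = 2*ρ * ρ^k := by ring

private lemma summable_geom_shift {r : ℝ} (h0 : 0 ≤ r) (h1 : r < 1) (m : ℕ) :
    Summable (fun k : ℕ => r^(k+m)) := by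
  refine ((summable_geometric_of_lt_one h0 h1).mul_right (r^m)).congr fun k => ?_
  rw [← pow_add]

private lemma tsum_geom_shift {r : ℝ} (h0 : 0 ≤ r) (h1 : r < 1) (m : ℕ) :
    ∑' k : ℕ, r^(k+m) = r^m / (1-r) := by
  have he : (fun k : ℕ => r^(k+m)) = fun k : ℕ => r^k * r^m := by
    funext k; rw [pow_add]
  rw [he, tsum_mul_right, tsum_geometric_of_lt_one h0 h1]
  ring

private lemma f_le_f {a b : ℝ} (h0 : 0 ≤ a) (hab : a ≤ b) (hb1 : b < 1)
    (hsb : Summable (fun k : ℕ => Real.arcsin (b^(k+1)))) :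
    (∑' k : ℕ, Real.arcsin (a^(k+1))) ≤ ∑' k : ℕ, Real.arcsin (b^(k+1)) := by
  have hle : ∀ k : ℕ, Real.arcsin (a^(k+1)) ≤ Real.arcsin (b^(k+1)) :=
    fun k => Real.monotone_arcsin (pow_le_pow_left₀ h0 hab _)
  exact Summable.tsum_le_tsum hle
    (Summable.of_nonneg_of_le (fun k => Real.arcsin_nonneg.2 (by positivity)) hle hsb) hsb

private lemma f_lt_f {a b : ℝ} (h0 : 0 ≤ a) (hab : a < b) (hb1 : b < 1)
    (hsb : Summable (fun k : ℕ => Real.arcsin (b^(k+1)))) :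
    (∑' k : ℕ, Real.arcsin (a^(k+1))) < ∑' k : ℕ, Real.arcsin (b^(k+1)) := by
  have hle : ∀ k : ℕ, Real.arcsin (a^(k+1)) ≤ Real.arcsin (b^(k+1)) :=
    fun k => Real.monotone_arcsin (pow_le_pow_left₀ h0 hab.le _)
  refine Summable.tsum_lt_tsum_of_nonneg (fun k => Real.arcsin_nonneg.2 (by positivity)) hle
    (i := 0) ?_ hsb
  have key : Real.arcsin a < Real.arcsin b :=
    Real.strictMonoOn_arcsin ⟨by linarith, by linarith⟩ ⟨by linarith, hb1.le⟩ hab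
  simpa using key

private lemma term_ub {c a : ℝ} (n : ℕ) (ha0 : 0 ≤ a) (ha1 : a ≤ 3/2)
    (h : c^n ≤ a - a^3/6 + a^5/120 - a^7/5040) : Real.arcsin (c^n) ≤ a :=
  arcsin_le_of ha0 ha1 (le_trans h (sin_lb7 a ha0))

private lemma term_lb {c b : ℝ} (n : ℕ) (hb0 : 0 ≤ b) (hb1 : b ≤ 3/2)
    (h : b - b^3/6 + b^5/120 - b^7/5040 + b^9/362880 ≤ c^n) : b ≤ Real.arcsin (c^n) :=
  le_arcsin_of hb0 hb1 (le_trans (sin_ub9 b hb0) h)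

set_option maxHeartbeats 2000000 in
private lemma upper_bound :
    (∑' k : ℕ, Real.arcsin ((0.74915365 : ℝ)^(k+1))) < π := by
  have hc0 : (0:ℝ) ≤ 0.74915365 := by norm_num
  have hc1 : (0.74915365:ℝ) < 1 := by norm_num
  have hsum := summable_S hc0 (by norm_num)
  rw [← hsum.sum_add_tsum_nat_add 7]
  set c : ℝ := 0.74915365 with hc
  -- tail bound
  have htail : (∑' i : ℕ, Real.arcsin (c^(i+7+1)))
      ≤ c^8/(1-c) + (c^3)^8/(6*(1-c^3)) + (c^5)^8/(5*(1-c^5)) := by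
    have hterm : ∀ i : ℕ, Real.arcsin (c^(i+7+1))
        ≤ c^(i+8) + (c^3)^(i+8)/6 + (c^5)^(i+8)/5 := by
      intro i
      have hx0 : (0:ℝ) ≤ c^(i+8) := by positivity
      have hx1 : c^(i+8) ≤ 1/2 := by
        calc c^(i+8) ≤ c^8 := pow_le_pow_of_le_one hc0 hc1.le (by omega)
        _ ≤ 1/2 := by norm_num
      have := arcsin_tail_ub hx0 hx1
      have he3 : (c^(i+8))^3 = (c^3)^(i+8) := by rw [← pow_mul, ← pow_mul, Nat.mul_comm]
      have he5 : (c^(i+8))^5 = (c^5)^(i+8) := by rw [← pow_mul, ← pow_mul, Nat.mul_comm]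
      have he : c^(i+7+1) = c^(i+8) := by norm_num
      rw [he]
      calc Real.arcsin (c^(i+8)) ≤ c^(i+8) + (c^(i+8))^3/6 + (c^(i+8))^5/5 := this
      _ = c^(i+8) + (c^3)^(i+8)/6 + (c^5)^(i+8)/5 := by rw [he3, he5]
    have hs1 := summable_geom_shift hc0 hc1 8
    have hs3 := summable_geom_shift (r := c^3) (by positivity) (by norm_num) 8
    have hs5 := summable_geom_shift (r := c^5) (by positivity) (by norm_num) 8
    have hsg : Summable (fun i : ℕ => c^(i+8) + (c^3)^(i+8)/6 + (c^5)^(i+8)/5) :=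
      (hs1.add (hs3.div_const 6)).add (hs5.div_const 5)
    have hsl : Summable (fun i : ℕ => Real.arcsin (c^(i+7+1))) :=
      (summable_nat_add_iff 7).2 hsum
    calc (∑' i : ℕ, Real.arcsin (c^(i+7+1)))
        ≤ ∑' i : ℕ, (c^(i+8) + (c^3)^(i+8)/6 + (c^5)^(i+8)/5) :=
          Summable.tsum_le_tsum hterm hsl hsg
      _ = (∑' i : ℕ, c^(i+8)) + ((∑' i : ℕ, (c^3)^(i+8))/6) + ((∑' i : ℕ, (c^5)^(i+8))/5) := by
          rw [Summable.tsum_add (hs1.add (hs3.div_const 6)) (hs5.div_const 5),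
            Summable.tsum_add hs1 (hs3.div_const 6), tsum_div_const, tsum_div_const]
      _ = c^8/(1-c) + (c^3)^8/(6*(1-c^3)) + (c^5)^8/(5*(1-c^5)) := by
          rw [tsum_geom_shift hc0 hc1 8,
            tsum_geom_shift (r := c^3) (by positivity) (by norm_num) 8,
            tsum_geom_shift (r := c^5) (by positivity) (by norm_num) 8]
          ring
  -- head bound
  have t0 : Real.arcsin (c^(0+1)) ≤ 0.84678437 := term_ub _ (by norm_num) (by norm_num) (by norm_num)
  have t1 : Real.arcsin (c^(1+1)) ≤ 0.595872641 := term_ub _ (by norm_num) (by norm_num) (by norm_num)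
  have t2 : Real.arcsin (c^(2+1)) ≤ 0.433939465 := term_ub _ (by norm_num) (by norm_num) (by norm_num)
  have t3 : Real.arcsin (c^(3+1)) ≤ 0.320436056 := term_ub _ (by norm_num) (by norm_num) (by norm_num)
  have t4 : Real.arcsin (c^(4+1)) ≤ 0.238215354 := term_ub _ (by norm_num) (by norm_num) (by norm_num)
  have t5 : Real.arcsin (c^(5+1)) ≤ 0.177710762 := term_ub _ (by norm_num) (by norm_num) (by norm_num)
  have t6 : Real.arcsin (c^(6+1)) ≤ 0.132823226 := term_ub _ (by norm_num) (by norm_num) (by norm_num)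
  have hhead : (∑ i ∈ Finset.range 7, Real.arcsin (c^(i+1)))
      ≤ (0.84678437 + 0.595872641 + 0.433939465 + 0.320436056 + 0.238215354
        + 0.177710762 + 0.132823226 : ℝ) := by
    rw [Finset.sum_range_succ, Finset.sum_range_succ, Finset.sum_range_succ,
      Finset.sum_range_succ, Finset.sum_range_succ, Finset.sum_range_succ,
      Finset.sum_range_succ, Finset.sum_range_zero]
    linarith
  have hq1 : c^8/(1-c) ≤ 0.39552 := by
    rw [hc, div_le_iff₀ (by norm_num)]
    norm_num
  have hq3 : (c^3)^8/(6*(1-c^3)) ≤ 0.000282 := by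
    rw [hc, div_le_iff₀ (by norm_num)]
    norm_num
  have hq5 : (c^5)^8/(5*(1-c^5)) ≤ 0.0000026 := by
    rw [hc, div_le_iff₀ (by norm_num)]
    norm_num
  have hnum : (0.84678437 + 0.595872641 + 0.433939465 + 0.320436056 + 0.238215354
        + 0.177710762 + 0.132823226 : ℝ)
      + (c^8/(1-c) + (c^3)^8/(6*(1-c^3)) + (c^5)^8/(5*(1-c^5))) < 3.141592 := by
    have : (0.84678437 + 0.595872641 + 0.433939465 + 0.320436056 + 0.238215354
        + 0.177710762 + 0.132823226 + (0.39552 + 0.000282 + 0.0000026) : ℝ) < 3.141592 := by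
      norm_num
    linarith
  calc (∑ i ∈ Finset.range 7, Real.arcsin (c^(i+1))) + (∑' i : ℕ, Real.arcsin (c^(i+7+1)))
      ≤ (0.84678437 + 0.595872641 + 0.433939465 + 0.320436056 + 0.238215354
        + 0.177710762 + 0.132823226 : ℝ)
        + (c^8/(1-c) + (c^3)^8/(6*(1-c^3)) + (c^5)^8/(5*(1-c^5))) := by linarith
    _ < 3.141592 := hnum
    _ < π := Real.pi_gt_d6

set_option maxHeartbeats 1000000 in
private lemma lower_bound :
    π < (∑' k : ℕ, Real.arcsin ((3/4 : ℝ)^(k+1))) := by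
  have hc0 : (0:ℝ) ≤ 3/4 := by norm_num
  have hc1 : (3/4:ℝ) < 1 := by norm_num
  have hsum := summable_S hc0 (by norm_num)
  rw [← hsum.sum_add_tsum_nat_add 4]
  set c : ℝ := 3/4 with hc
  have htail : c^5/(1-c) ≤ ∑' i : ℕ, Real.arcsin (c^(i+4+1)) := by
    have hterm : ∀ i : ℕ, c^(i+5) ≤ Real.arcsin (c^(i+4+1)) := by
      intro i
      have he : c^(i+4+1) = c^(i+5) := by norm_num
      rw [he]
      exact self_le_arcsin (by positivity)
        (le_trans (pow_le_one₀ hc0 hc1.le) le_rfl)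
    have hsl : Summable (fun i : ℕ => Real.arcsin (c^(i+4+1))) :=
      (summable_nat_add_iff 4).2 hsum
    calc c^5/(1-c) = ∑' i : ℕ, c^(i+5) := (tsum_geom_shift hc0 hc1 5).symm
      _ ≤ ∑' i : ℕ, Real.arcsin (c^(i+4+1)) :=
        Summable.tsum_le_tsum hterm (summable_geom_shift hc0 hc1 5) hsl
  have t0 : (0.848062072 : ℝ) ≤ Real.arcsin (c^(0+1)) :=
    term_lb _ (by norm_num) (by norm_num) (by norm_num)
  have t1 : (0.597406416 : ℝ) ≤ Real.arcsin (c^(1+1)) :=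
    term_lb _ (by norm_num) (by norm_num) (by norm_num)
  have t2 : (0.435512371 : ℝ) ≤ Real.arcsin (c^(2+1)) :=
    term_lb _ (by norm_num) (by norm_num) (by norm_num)
  have t3 : (0.321938698 : ℝ) ≤ Real.arcsin (c^(3+1)) :=
    term_lb _ (by norm_num) (by norm_num) (by norm_num)
  have hhead : (0.848062072 + 0.597406416 + 0.435512371 + 0.321938698 : ℝ)
      ≤ ∑ i ∈ Finset.range 4, Real.arcsin (c^(i+1)) := by
    rw [Finset.sum_range_succ, Finset.sum_range_succ, Finset.sum_range_succ,
      Finset.sum_range_succ, Finset.sum_range_zero]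
    linarith
  have hgeom : (0.94921875 : ℝ) ≤ c^5/(1-c) := by
    rw [hc, le_div_iff₀ (by norm_num)]
    norm_num
  calc π < 3.141593 := Real.pi_lt_d6
    _ ≤ (0.848062072 + 0.597406416 + 0.435512371 + 0.321938698 : ℝ) + 0.94921875 := by norm_num
    _ ≤ (∑ i ∈ Finset.range 4, Real.arcsin (c^(i+1))) + ∑' i : ℕ, Real.arcsin (c^(i+4+1)) := by
        linarith

private lemma cont_g : Continuous
    (fun x : ℝ => ∑' k : ℕ, Real.arcsin ((max 0 (min x (3/4)))^(k+1))) := by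
  apply continuous_tsum (u := fun k : ℕ => 2 * (3/4:ℝ)^(k+1))
  · intro k
    exact Real.continuous_arcsin.comp
      ((continuous_const.max (continuous_id.min continuous_const)).pow (k+1))
  · exact (summable_geom_shift (r := (3/4:ℝ)) (by norm_num) (by norm_num) 1).mul_left 2
  · intro k x
    set m : ℝ := max 0 (min x (3/4)) with hm
    have hm0 : 0 ≤ m := le_max_left _ _
    have hm1 : m ≤ 3/4 := max_le (by norm_num) (min_le_right _ _)
    have hp0 : (0:ℝ) ≤ m^(k+1) := by positivity
    have hp1 : m^(k+1) ≤ 3/4 := by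
      calc m^(k+1) ≤ m^1 := pow_le_pow_of_le_one hm0 (by linarith) (by omega)
      _ = m := pow_one m
      _ ≤ 3/4 := hm1
    rw [Real.norm_eq_abs, abs_of_nonneg (Real.arcsin_nonneg.2 hp0)]
    calc Real.arcsin (m^(k+1)) ≤ 2 * m^(k+1) := arcsin_le_two_mul hp0 hp1
    _ ≤ 2 * (3/4)^(k+1) := by
        have := pow_le_pow_left₀ hm0 hm1 (k+1)
        linarith


set_option maxHeartbeats 1000000 in
/-- There is a unique `ρ ∈ (0,1)` with `∑_{k≥1} arcsin (ρ^k) = π`; it lies in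
`(0.749, 0.75)`. Consequently, any `ρ₁ ∈ (0,1)` whose shrinking probes can cover the
perimeter (i.e. `∑_{k≥1} arcsin (ρ₁^k) ≥ π`) satisfies `ρ₁ ≥ 0.749`, and the
coefficient `-1 / log₂ ρ₁` exceeds `2.4`. -/
theorem perimeter_covering_threshold :
    (∃ ρ : ℝ, (ρ ∈ Set.Ioo (0 : ℝ) 1 ∧ (∑' k : ℕ, Real.arcsin (ρ ^ (k + 1))) = Real.pi) ∧
      (∀ ρ' : ℝ, ρ' ∈ Set.Ioo (0 : ℝ) 1 →
        (∑' k : ℕ, Real.arcsin (ρ' ^ (k + 1))) = Real.pi → ρ' = ρ) ∧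
      0.749 < ρ ∧ ρ < 0.75) ∧
    (∀ ρ₁ : ℝ, ρ₁ ∈ Set.Ioo (0 : ℝ) 1 →
      Real.pi ≤ (∑' k : ℕ, Real.arcsin (ρ₁ ^ (k + 1))) →
      (0.749 : ℝ) ≤ ρ₁ ∧ (2.4 : ℝ) < -1 / Real.logb 2 ρ₁) := by
  have hclamp : ∀ x : ℝ, 0.74915365 ≤ x → x ≤ 3/4 → max 0 (min x (3/4)) = x := by
    intro x h1 h2
    rw [min_eq_left h2, max_eq_right (by linarith)]
  -- IVT
  have hIcc : Real.pi ∈ Set.Icc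
      ((fun x : ℝ => ∑' k : ℕ, Real.arcsin ((max 0 (min x (3/4)))^(k+1))) 0.74915365)
      ((fun x : ℝ => ∑' k : ℕ, Real.arcsin ((max 0 (min x (3/4)))^(k+1))) (3/4)) := by
    constructor
    · simp only [hclamp 0.74915365 le_rfl (by norm_num)]
      exact upper_bound.le
    · simp only [hclamp (3/4) (by norm_num) le_rfl]
      exact lower_bound.le
  obtain ⟨ρ, hρmem, hρeq⟩ := intermediate_value_Icc (by norm_num : (0.74915365:ℝ) ≤ 3/4)
    cont_g.continuousOn hIcc
  have hρc : max 0 (min ρ (3/4)) = ρ := hclamp ρ hρmem.1 hρmem.2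
  have hfρ : (∑' k : ℕ, Real.arcsin (ρ ^ (k + 1))) = Real.pi := by
    rw [← hρeq]
    simp only [hρc]
  have hρ0 : (0:ℝ) < ρ := lt_of_lt_of_le (by norm_num) hρmem.1
  have hρ1 : ρ < 1 := lt_of_le_of_lt hρmem.2 (by norm_num)
  have hρlt : ρ < 3/4 := by
    rcases lt_or_eq_of_le hρmem.2 with h | h
    · exact h
    · exfalso
      rw [h] at hfρ
      exact absurd hfρ (ne_of_gt lower_bound)
  have huniq : ∀ ρ' : ℝ, ρ' ∈ Set.Ioo (0 : ℝ) 1 →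
      (∑' k : ℕ, Real.arcsin (ρ' ^ (k + 1))) = Real.pi → ρ' = ρ := by
    intro ρ' hmem' heq'
    have hsum' : Summable (fun k : ℕ => Real.arcsin (ρ' ^ (k+1))) := by
      by_contra h
      rw [tsum_eq_zero_of_not_summable h] at heq'
      exact Real.pi_ne_zero heq'.symm
    rcases lt_trichotomy ρ' ρ with h | h | h
    · exfalso
      have := f_lt_f hmem'.1.le h hρ1 (summable_S hρ0.le hρlt.le)
      rw [heq', hfρ] at this
      exact lt_irrefl _ this
    · exact h
    · exfalso
      have := f_lt_f hρ0.le h hmem'.2 hsum'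
      rw [heq', hfρ] at this
      exact lt_irrefl _ this
  refine ⟨⟨ρ, ⟨⟨hρ0, hρ1⟩, hfρ⟩, huniq, ?_, ?_⟩, ?_⟩
  · calc (0.749:ℝ) < 0.74915365 := by norm_num
      _ ≤ ρ := hρmem.1
  · calc ρ < 3/4 := hρlt
      _ ≤ 0.75 := by norm_num
  · intro ρ₁ hmem hge
    have h1pos : (0:ℝ) < ρ₁ := hmem.1
    have h1lt : ρ₁ < 1 := hmem.2
    have hgt : (0.74915365:ℝ) < ρ₁ := by
      rcases lt_or_ge 0.74915365 ρ₁ with h | h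
      · exact h
      · exfalso
        have hle := f_le_f h1pos.le h (by norm_num) (summable_S (by norm_num) (by norm_num))
        have : Real.pi < Real.pi := lt_of_le_of_lt (le_trans hge hle) upper_bound
        exact lt_irrefl _ this
    constructor
    · linarith
    · -- logb computation
      have h32 : (1:ℝ)/32 < ρ₁^12 := by
        calc (1:ℝ)/32 < 0.74915365^12 := by norm_num
        _ ≤ ρ₁^12 := pow_le_pow_left₀ (by norm_num) hgt.le 12
      have hlog2 : (0:ℝ) < Real.log 2 := Real.log_pos (by norm_num)
      have hlogneg : Real.log ρ₁ < 0 := Real.log_neg h1pos h1lt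
      have h1 : Real.log (1/32 : ℝ) < Real.log (ρ₁^12) :=
        Real.log_lt_log (by norm_num) h32
      rw [Real.log_pow] at h1
      have h132 : Real.log (1/32:ℝ) = -(5 * Real.log 2) := by
        rw [one_div, Real.log_inv, show (32:ℝ) = 2^5 by norm_num, Real.log_pow]
        push_cast
        ring
      have hL : Real.logb 2 ρ₁ = Real.log ρ₁ / Real.log 2 := rfl
      have hLneg : Real.logb 2 ρ₁ < 0 := by
        rw [hL]
        exact div_neg_of_neg_of_pos hlogneg hlog2
      have hLgt : -(5/12 : ℝ) < Real.logb 2 ρ₁ := by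
        rw [hL, lt_div_iff₀ hlog2]
        push_cast at h1
        linarith
      have hinv : (2.4:ℝ) = 1/(5/12) := by norm_num
      have key : 1/((5:ℝ)/12) < 1/(-(Real.logb 2 ρ₁)) :=
        one_div_lt_one_div_of_lt (by linarith) (by linarith)
      have : -1/(Real.logb 2 ρ₁) = 1/(-(Real.logb 2 ρ₁)) := by ring
      rw [hinv, this]
      exact key
end

section
/- A closed disk of radius r can be covered by an L-layer lattice of regular hexagons of side length s = 2r/(3L−2). Equivalently, the inradius of the hexagonal region formed by an L-layer lattice of hexagons of side length s is at least ((3L/2)−1)·s for even L. -/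
open Real Complex

/-- The regular hexagon with center `c` and circumradius (= side length) `s`,
as a subset of the Euclidean plane (modeled by `ℂ`). -/
noncomputable def regularHexagon (c : ℂ) (s : ℝ) : Set ℂ :=
  convexHull ℝ
    (Set.range fun k : Fin 6 => c + (s : ℂ) * Complex.exp ((k : ℕ) * (Real.pi / 3) * Complex.I))


noncomputable def wHex : ℂ := 1/2 + ((Real.sqrt 3 : ℝ) : ℂ)/2 * Complex.I

lemma sqrt3C : ((Real.sqrt 3 : ℝ) : ℂ) * ((Real.sqrt 3 : ℝ) : ℂ) = 3 := by
  rw [← Complex.ofReal_mul, Real.mul_self_sqrt (by norm_num)]; norm_num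

lemma exp_k_pi_div_three (k : ℕ) :
    Complex.exp ((k : ℂ) * (Real.pi / 3) * Complex.I) = wHex ^ k := by
  rw [mul_assoc, Complex.exp_nat_mul]
  congr 1
  have h : ((Real.pi : ℂ)/3) = ((Real.pi/3 : ℝ) : ℂ) := by push_cast; ring
  rw [h, Complex.exp_mul_I, ← Complex.ofReal_cos, ← Complex.ofReal_sin,
    Real.cos_pi_div_three, Real.sin_pi_div_three, wHex]
  push_cast
  ring

lemma wHex_pow0 : wHex ^ (0:ℕ) = 1 := by norm_num
lemma wHex_pow1 : wHex ^ (1:ℕ) = 1/2 + ((Real.sqrt 3 : ℝ) : ℂ)/2 * Complex.I := pow_one _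
lemma wHex_pow2 : wHex ^ (2:ℕ) = -1/2 + ((Real.sqrt 3 : ℝ) : ℂ)/2 * Complex.I := by
  rw [wHex]
  linear_combination (Complex.I*Complex.I/4)*sqrt3C + (3/4)*Complex.I_mul_I
lemma wHex_pow3 : wHex ^ (3:ℕ) = -1 := by
  have h : wHex ^ (3:ℕ) = wHex ^ (2:ℕ) * wHex := by ring
  rw [h, wHex_pow2, wHex]
  linear_combination (Complex.I*Complex.I/4)*sqrt3C + (3/4)*Complex.I_mul_I
lemma wHex_pow4 : wHex ^ (4:ℕ) = -1/2 - ((Real.sqrt 3 : ℝ) : ℂ)/2 * Complex.I := by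
  have h : wHex ^ (4:ℕ) = wHex ^ (3:ℕ) * wHex := by ring
  rw [h, wHex_pow3, wHex]; ring
lemma wHex_pow5 : wHex ^ (5:ℕ) = 1/2 - ((Real.sqrt 3 : ℝ) : ℂ)/2 * Complex.I := by
  have h : wHex ^ (5:ℕ) = wHex ^ (3:ℕ) * wHex ^ (2:ℕ) := by ring
  rw [h, wHex_pow3, wHex_pow2]; ring

lemma hexVertex_mem (c : ℂ) (s : ℝ) (k : ℕ) (hk : k < 6) :
    c + (s:ℂ) * wHex ^ k ∈ regularHexagon c s := by
  rw [← exp_k_pi_div_three]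
  have := subset_convexHull ℝ
    (Set.range fun k : Fin 6 => c + (s : ℂ) * Complex.exp ((k : ℕ) * (Real.pi / 3) * Complex.I))
    ⟨(⟨k, hk⟩ : Fin 6), rfl⟩
  exact this

lemma mem_regularHexagon {s : ℝ} (hs : 0 < s) (c z : ℂ)
    (h1 : Real.sqrt 3 * |(z - c).re| + |(z - c).im| ≤ Real.sqrt 3 * s)
    (h2 : |(z - c).im| ≤ Real.sqrt 3 / 2 * s) :
    z ∈ regularHexagon c s := by
  have hq : Real.sqrt 3 * Real.sqrt 3 = 3 := Real.mul_self_sqrt (by norm_num)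
  have hqpos : (0:ℝ) < Real.sqrt 3 := Real.sqrt_pos.2 (by norm_num)
  have hconv : Convex ℝ (regularHexagon c s) := convex_convexHull ℝ _
  set dx : ℝ := (z - c).re with hdx
  set dy : ℝ := (z - c).im with hdy
  have hzeq : z = c + (((dx : ℝ) : ℂ) + ((dy : ℝ) : ℂ) * Complex.I) := by
    rw [hdx, hdy, Complex.re_add_im]; ring
  rcases le_or_gt 0 dy with hdy0 | hdy0
  · -- upper half: vertices 3,2 and 0,1
    have h2' : dy ≤ Real.sqrt 3 / 2 * s := (le_abs_self dy).trans h2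
    have h1' : Real.sqrt 3 * |dx| + dy ≤ Real.sqrt 3 * s := by
      calc Real.sqrt 3 * |dx| + dy ≤ Real.sqrt 3 * |dx| + |dy| := by
            nlinarith [le_abs_self dy]
        _ ≤ _ := h1
    set t : ℝ := 2*dy/(Real.sqrt 3*s) with htdef
    have ht : t * (Real.sqrt 3*s) = 2*dy := by
      rw [htdef]; field_simp
    have ht0 : 0 ≤ t := by rw [htdef]; positivity
    have ht1 : t ≤ 1 := by
      rw [htdef, div_le_one (by positivity)]; linarith
    set e : ℝ := s - t*s/2 with hedef
    have he : Real.sqrt 3 * e = Real.sqrt 3*s - dy := by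
      rw [hedef]; linear_combination (-1/2)*ht
    have hepos : 0 < e := by rw [hedef]; nlinarith
    have hdx_le : |dx| ≤ e := by
      have : Real.sqrt 3 * |dx| ≤ Real.sqrt 3 * e := by rw [he]; linarith
      exact le_of_mul_le_mul_left this hqpos
    set u : ℝ := (dx + e)/(2*e) with hudef
    have hu : (2*u - 1)*e = dx := by
      rw [hudef]; field_simp; ring
    have hu0 : 0 ≤ u := by
      rw [hudef]
      exact div_nonneg (by nlinarith [neg_abs_le dx]) (by positivity)
    have hu1 : u ≤ 1 := by
      rw [hudef, div_le_one (by positivity)]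
      nlinarith [le_abs_self dx]
    have hA := hconv (hexVertex_mem c s 3 (by norm_num)) (hexVertex_mem c s 2 (by norm_num))
      (by linarith : (0:ℝ) ≤ 1 - t) ht0 (by ring)
    have hB := hconv (hexVertex_mem c s 0 (by norm_num)) (hexVertex_mem c s 1 (by norm_num))
      (by linarith : (0:ℝ) ≤ 1 - t) ht0 (by ring)
    have hz' : z = (1-u) • ((1-t) • (c + (s:ℂ) * wHex ^ (3:ℕ)) + t • (c + (s:ℂ) * wHex ^ (2:ℕ)))
        + u • ((1-t) • (c + (s:ℂ) * wHex ^ (0:ℕ)) + t • (c + (s:ℂ) * wHex ^ (1:ℕ))) := by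
      rw [wHex_pow0, wHex_pow1, wHex_pow2, wHex_pow3, hzeq]
      simp only [Complex.real_smul]
      push_cast
      have htC : (t:ℂ) * (((Real.sqrt 3 : ℝ):ℂ)*(s:ℂ)) = 2*(dy:ℂ) := by
        exact_mod_cast congrArg Complex.ofReal ht
      have heC : (e:ℂ) = (s:ℂ) - (t:ℂ)*(s:ℂ)/2 := by
        exact_mod_cast congrArg Complex.ofReal hedef
      have huC : (2*(u:ℂ) - 1)*(e:ℂ) = (dx:ℂ) := by
        exact_mod_cast congrArg Complex.ofReal hu
      linear_combination (-1 : ℂ)*huC + (2*(u:ℂ)-1)*heC + (-Complex.I/2)*htC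
    rw [hz']
    exact hconv hA hB (by linarith) hu0 (by ring)
  · -- lower half: vertices 3,4 and 0,5
    have h2' : -dy ≤ Real.sqrt 3 / 2 * s := (neg_le_abs dy).trans h2
    have h1' : Real.sqrt 3 * |dx| - dy ≤ Real.sqrt 3 * s := by
      calc Real.sqrt 3 * |dx| - dy ≤ Real.sqrt 3 * |dx| + |dy| := by
            nlinarith [neg_le_abs dy]
        _ ≤ _ := h1
    set t : ℝ := -2*dy/(Real.sqrt 3*s) with htdef
    have ht : t * (Real.sqrt 3*s) = -2*dy := by
      rw [htdef]; field_simp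
    have ht0 : 0 ≤ t := by
      rw [htdef]
      exact div_nonneg (by linarith) (by positivity)
    have ht1 : t ≤ 1 := by
      rw [htdef, div_le_one (by positivity)]; linarith
    set e : ℝ := s - t*s/2 with hedef
    have he : Real.sqrt 3 * e = Real.sqrt 3*s + dy := by
      rw [hedef]; linear_combination (-1/2)*ht
    have hepos : 0 < e := by rw [hedef]; nlinarith
    have hdx_le : |dx| ≤ e := by
      have : Real.sqrt 3 * |dx| ≤ Real.sqrt 3 * e := by rw [he]; linarith
      exact le_of_mul_le_mul_left this hqpos
    set u : ℝ := (dx + e)/(2*e) with hudef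
    have hu : (2*u - 1)*e = dx := by
      rw [hudef]; field_simp; ring
    have hu0 : 0 ≤ u := by
      rw [hudef]
      exact div_nonneg (by nlinarith [neg_abs_le dx]) (by positivity)
    have hu1 : u ≤ 1 := by
      rw [hudef, div_le_one (by positivity)]
      nlinarith [le_abs_self dx]
    have hA := hconv (hexVertex_mem c s 3 (by norm_num)) (hexVertex_mem c s 4 (by norm_num))
      (by linarith : (0:ℝ) ≤ 1 - t) ht0 (by ring)
    have hB := hconv (hexVertex_mem c s 0 (by norm_num)) (hexVertex_mem c s 5 (by norm_num))
      (by linarith : (0:ℝ) ≤ 1 - t) ht0 (by ring)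
    have hz' : z = (1-u) • ((1-t) • (c + (s:ℂ) * wHex ^ (3:ℕ)) + t • (c + (s:ℂ) * wHex ^ (4:ℕ)))
        + u • ((1-t) • (c + (s:ℂ) * wHex ^ (0:ℕ)) + t • (c + (s:ℂ) * wHex ^ (5:ℕ))) := by
      rw [wHex_pow0, wHex_pow5, wHex_pow4, wHex_pow3, hzeq]
      simp only [Complex.real_smul]
      push_cast
      have htC : (t:ℂ) * (((Real.sqrt 3 : ℝ):ℂ)*(s:ℂ)) = -2*(dy:ℂ) := by
        exact_mod_cast congrArg Complex.ofReal ht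
      have heC : (e:ℂ) = (s:ℂ) - (t:ℂ)*(s:ℂ)/2 := by
        exact_mod_cast congrArg Complex.ofReal hedef
      have huC : (2*(u:ℂ) - 1)*(e:ℂ) = (dx:ℂ) := by
        exact_mod_cast congrArg Complex.ofReal hu
      linear_combination (-1 : ℂ)*huC + (2*(u:ℂ)-1)*heC + (Complex.I/2)*htC
    rw [hz']
    exact hconv hA hB (by linarith) hu0 (by ring)


/-- The hex index set of "radius" a. -/
noncomputable def hexSet (a : ℤ) : Finset (ℤ × ℤ) :=
  (Finset.Icc (-a) a).biUnion (fun m =>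
    (Finset.Icc (max (-a) (-a - m)) (min a (a - m))).map
      ⟨fun n => (m, n), fun _ _ h => by simpa using h⟩)

lemma mem_hexSet {a m n : ℤ} (h1 : |m| ≤ a) (h2 : |n| ≤ a) (h3 : |m + n| ≤ a) :
    (m, n) ∈ hexSet a := by
  rw [hexSet, Finset.mem_biUnion]
  refine ⟨m, ?_, ?_⟩
  · rw [Finset.mem_Icc]; rw [abs_le] at h1; exact h1
  · rw [Finset.mem_map]
    refine ⟨n, ?_, rfl⟩
    rw [Finset.mem_Icc]
    rw [abs_le] at h2 h3
    omega

lemma sumAbs (a : ℕ) : ∑ m ∈ Finset.Icc (-(a:ℤ)) a, |m| = a * (a + 1) := by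
  induction a with
  | zero => simp
  | succ a ih =>
    have h : Finset.Icc (-(a+1:ℤ)) (a+1) =
        insert (-(a+1:ℤ)) (insert ((a:ℤ)+1) (Finset.Icc (-(a:ℤ)) a)) := by
      ext x
      simp only [Finset.mem_Icc, Finset.mem_insert]
      push_cast
      omega
    push_cast [h]
    rw [Finset.sum_insert, Finset.sum_insert]
    · rw [ih]
      have e1 : |(-((a:ℤ)+1))| = (a:ℤ)+1 := by rw [abs_neg, _root_.abs_of_nonneg]; positivity
      have e2 : |((a:ℤ)+1)| = (a:ℤ)+1 := by rw [_root_.abs_of_nonneg]; positivity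
      rw [e1, e2]; push_cast; ring
    · simp only [Finset.mem_Icc]; omega
    · simp only [Finset.mem_insert, Finset.mem_Icc]; omega

lemma card_hexSet (a : ℕ) : (hexSet a).card = 3 * a * a + 3 * a + 1 := by
  rw [hexSet, Finset.card_biUnion]
  · have hsum : ∀ m ∈ Finset.Icc (-(a:ℤ)) a,
        ((Finset.Icc (max (-(a:ℤ)) (-(a:ℤ) - m)) (min (a:ℤ) ((a:ℤ) - m))).map
          ⟨fun n => (m, n), fun _ _ h => by simpa using h⟩).card
        = 2 * a + 1 - m.natAbs := by
      intro m hm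
      rw [Finset.mem_Icc] at hm
      rw [Finset.card_map, Int.card_Icc]
      omega
    rw [Finset.sum_congr rfl hsum]
    have key : ((∑ m ∈ Finset.Icc (-(a:ℤ)) a, (2 * a + 1 - m.natAbs) : ℕ) : ℤ)
        = 3 * a * a + 3 * a + 1 := by
      push_cast
      have : ∀ m ∈ Finset.Icc (-(a:ℤ)) a,
          ((2 * a + 1 - m.natAbs : ℕ) : ℤ) = 2 * (a:ℤ) + 1 - |m| := by
        intro m hm
        rw [Finset.mem_Icc] at hm
        have : m.natAbs ≤ 2 * a + 1 := by omega
        push_cast [Nat.cast_sub this]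
        omega
      rw [Finset.sum_congr rfl this, Finset.sum_sub_distrib, sumAbs, Finset.sum_const,
        Int.card_Icc]
      have : ((a:ℤ) + 1 - -(a:ℤ)).toNat = 2 * a + 1 := by omega
      rw [this]
      push_cast
      ring
    exact_mod_cast key
  · intro i hi j hj hij
    refine Finset.disjoint_left.mpr ?_
    rintro ⟨p, q⟩ hp hq
    simp only [Finset.mem_map, Function.Embedding.coeFn_mk, Prod.mk.injEq] at hp hq
    obtain ⟨n1, -, rfl, rfl⟩ := hp
    obtain ⟨n2, hq⟩ := hq
    exact hij (congrArg Prod.fst hq.2).symm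



lemma round_half_toward_zero (t : ℝ) :
    ∃ n : ℤ, |t - n| ≤ 1/2 ∧ (t - n = -(1/2) → n ≤ 0) ∧ (t - n = 1/2 → 0 ≤ n) := by
  rcases le_or_gt 0 t with h | h
  · refine ⟨⌈t - 1/2⌉, ?_, ?_, ?_⟩
    · have h1 := Int.le_ceil (t - 1/2)
      have h2 := Int.ceil_lt_add_one (t - 1/2)
      rw [abs_le]; constructor <;> linarith
    · intro he
      have h2 := Int.ceil_lt_add_one (t - 1/2)
      exfalso; linarith
    · intro he
      have h1 : ((-1 : ℤ) : ℝ) < (⌈t - 1/2⌉ : ℤ) := by push_cast; linarith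
      have : (-1 : ℤ) < ⌈t - 1/2⌉ := by exact_mod_cast h1
      omega
  · refine ⟨⌊t + 1/2⌋, ?_, ?_, ?_⟩
    · have h1 := Int.floor_le (t + 1/2)
      have h2 := Int.lt_floor_add_one (t + 1/2)
      rw [abs_le]; constructor <;> linarith
    · intro he
      have h1 : ((⌊t + 1/2⌋ : ℤ) : ℝ) < 1 := by push_cast; linarith
      have : ⌊t + 1/2⌋ < (1 : ℤ) := by exact_mod_cast h1
      omega
    · intro he
      have h2 := Int.lt_floor_add_one (t + 1/2)
      exfalso; linarith

set_option maxHeartbeats 1000000 in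
lemma exists_lattice_point (s : ℝ) (hs : 0 < s) (x y : ℝ) :
    ∃ m n : ℤ,
      Real.sqrt 3 * |x - 3/2*m*s| + |y - Real.sqrt 3/2*(m+2*n)*s| ≤ Real.sqrt 3 * s ∧
      |y - Real.sqrt 3/2*(m+2*n)*s| ≤ Real.sqrt 3/2*s ∧
      |x - 3/2*m*s| < s ∧
      (y - Real.sqrt 3/2*(m+2*n)*s = -(Real.sqrt 3/2*s) → n ≤ 0) ∧
      (y - Real.sqrt 3/2*(m+2*n)*s = Real.sqrt 3/2*s → 0 ≤ n) := by
  have hq : Real.sqrt 3 * Real.sqrt 3 = 3 := Real.mul_self_sqrt (by norm_num)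
  have hqpos : (0:ℝ) < Real.sqrt 3 := Real.sqrt_pos.2 (by norm_num)
  set q : ℝ := Real.sqrt 3 with hqdef
  have hcol : ∀ m : ℤ, ∃ n : ℤ, |y - q/2*(m+2*n)*s| ≤ q/2*s ∧
      (y - q/2*(m+2*n)*s = -(q/2*s) → n ≤ 0) ∧
      (y - q/2*(m+2*n)*s = q/2*s → 0 ≤ n) := by
    intro m
    obtain ⟨n, hn1, hn2, hn3⟩ := round_half_toward_zero ((y - q/2*m*s)/(q*s))
    have hqs : (0:ℝ) < q*s := by positivity
    have hdyeq : y - q/2*(m+2*n)*s = (q*s) * ((y - q/2*m*s)/(q*s) - n) := by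
      field_simp
      ring
    refine ⟨n, ?_, ?_, ?_⟩
    · rw [hdyeq, abs_mul, _root_.abs_of_pos hqs]
      calc (q*s) * |(y - q/2*m*s)/(q*s) - n| ≤ (q*s) * (1/2) :=
            mul_le_mul_of_nonneg_left hn1 hqs.le
        _ = q/2*s := by ring
    · intro he
      apply hn2
      rw [hdyeq] at he
      have h : (q*s) * ((y - q/2*m*s)/(q*s) - n) = (q*s) * (-(1/2)) := by rw [he]; ring
      exact mul_left_cancel₀ (ne_of_gt hqs) h
    · intro he
      apply hn3
      rw [hdyeq] at he
      have h : (q*s) * ((y - q/2*m*s)/(q*s) - n) = (q*s) * (1/2) := by rw [he]; ring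
      exact mul_left_cancel₀ (ne_of_gt hqs) h
  set m0 : ℤ := ⌊2*x/(3*s)⌋ with hm0def
  have hf1 : ((m0:ℝ)) * (3*s) ≤ 2*x := (le_div_iff₀ (by positivity : (0:ℝ) < 3*s)).mp
    (Int.floor_le (2*x/(3*s)))
  have hf2 : 2*x < ((m0:ℝ) + 1) * (3*s) := by
    have := Int.lt_floor_add_one (2*x/(3*s))
    calc 2*x = (2*x/(3*s)) * (3*s) := by field_simp
      _ < ((m0:ℝ) + 1) * (3*s) := by
          apply mul_lt_mul_of_pos_right _ (by positivity : (0:ℝ) < 3*s)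
          exact_mod_cast this
  set d : ℝ := x - 3/2*m0*s with hddef
  have hd0 : 0 ≤ d := by rw [hddef]; linarith
  have hd1 : d < 3/2*s := by rw [hddef]; linarith
  clear_value d
  clear_value m0
  rcases le_or_gt d (1/2*s) with hA1 | hB0
  · -- case A1 : column m0, rectangle
    obtain ⟨n, hn1, hn2, hn3⟩ := hcol m0
    have hdx : x - 3/2*(m0:ℝ)*s = d := hddef.symm
    refine ⟨m0, n, ?_, hn1, ?_, hn2, hn3⟩
    · rw [hdx, _root_.abs_of_nonneg hd0]
      nlinarith [mul_le_mul_of_nonneg_left hA1 hqpos.le]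
    · rw [hdx, _root_.abs_of_nonneg hd0]; linarith
  rcases le_or_gt s d with hA2 | hB1
  · -- case A2 : column m0+1, rectangle
    obtain ⟨n, hn1, hn2, hn3⟩ := hcol (m0+1)
    push_cast at hn1 hn2 hn3
    have hdx : x - 3/2*((m0:ℝ)+1)*s = d - 3/2*s := by rw [hddef]; ring
    have habs : |d - 3/2*s| ≤ 1/2*s := by rw [abs_le]; constructor <;> linarith
    refine ⟨m0+1, n, ?_, ?_, ?_, ?_, ?_⟩ <;> push_cast
    · rw [hdx]; nlinarith [mul_le_mul_of_nonneg_left habs hqpos.le, hn1]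
    · exact hn1
    · rw [hdx, abs_lt]; constructor <;> linarith
    · exact hn2
    · exact hn3
  · -- case B : gap region
    set t0 : ℝ := (y - q/2*m0*s)/(q*s) with ht0def
    set k : ℤ := ⌊t0 + 1 - d/s⌋ with hkdef
    have hk1 : (k:ℝ) ≤ t0 + 1 - d/s := Int.floor_le _
    have hk2 : t0 + 1 - d/s < k + 1 := Int.lt_floor_add_one _
    have hw1 : d/s - 1 ≤ t0 - (k:ℝ) := by linarith
    have hw2 : t0 - (k:ℝ) < d/s := by linarith
    clear_value k
    clear_value t0
    have hqs : (0:ℝ) < q*s := by positivity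
    have hy0 : t0*(q*s) = y - q/2*m0*s := by
      rw [ht0def]; exact div_mul_cancel₀ _ (ne_of_gt hqs)
    have hdvs : (d/s)*s = d := div_mul_cancel₀ d (ne_of_gt hs)
    have hds : d/s < 1 := (div_lt_one hs).mpr hB1
    have hds2 : 1/2 < d/s := by rw [lt_div_iff₀ hs]; linarith
    rcases le_or_gt (t0 - k) (1 - d/s) with hsub | hsub
    · -- choose column m0
      have hdy : y - q/2*((m0:ℝ)+2*(k:ℝ))*s = (q*s)*(t0 - k) := by
        linear_combination (-1 : ℝ)*hy0
      have hdx : x - 3/2*(m0:ℝ)*s = d := hddef.symm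
      have hub : (q*s)*(t0-k) ≤ q*(s-d) := by
        calc (q*s)*(t0-k) ≤ (q*s)*(1-d/s) :=
              mul_le_mul_of_nonneg_left hsub hqs.le
          _ = q*(s-d) := by linear_combination (-q)*hdvs
      have hlb : -(q*(s-d)) ≤ (q*s)*(t0-k) := by
        have h1 : (q*s)*(d/s-1) ≤ (q*s)*(t0-k) :=
          mul_le_mul_of_nonneg_left hw1 hqs.le
        have h2 : (q*s)*(d/s-1) = -(q*(s-d)) := by linear_combination q*hdvs
        linarith
      have hdyb : |y - q/2*((m0:ℝ)+2*(k:ℝ))*s| ≤ q*(s-d) := by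
        rw [hdy, abs_le]; constructor <;> linarith
      have hstrict : q*(s-d) < q/2*s := by nlinarith
      refine ⟨m0, k, ?_, ?_, ?_, ?_, ?_⟩ <;> push_cast
      · rw [hdx, _root_.abs_of_nonneg hd0]
        have h3 : q*d + q*(s-d) = q*s := by ring
        linarith [hdyb]
      · linarith [hdyb]
      · rw [hdx, _root_.abs_of_nonneg hd0]; linarith
      · intro he
        exfalso
        rw [he] at hdyb
        rw [abs_neg, _root_.abs_of_pos (by positivity : (0:ℝ) < q/2*s)] at hdyb
        linarith
      · intro he
        exfalso
        rw [he] at hdyb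
        rw [_root_.abs_of_pos (by positivity : (0:ℝ) < q/2*s)] at hdyb
        linarith
    · -- choose column m0+1
      have hdy : y - q/2*(((m0:ℝ)+1)+2*(k:ℝ))*s = (q*s)*(t0 - k - 1/2) := by
        linear_combination (-1 : ℝ)*hy0
      have hdx : x - 3/2*((m0:ℝ)+1)*s = d - 3/2*s := by rw [hddef]; ring
      have hub : (q*s)*(t0-k-1/2) < q*(d-1/2*s) := by
        calc (q*s)*(t0-k-1/2) < (q*s)*(d/s-1/2) :=
              mul_lt_mul_of_pos_left (by linarith) hqs
          _ = q*(d-1/2*s) := by linear_combination q*hdvs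
      have hlb : -(q*(d-1/2*s)) < (q*s)*(t0-k-1/2) := by
        have h1 : (q*s)*(1/2-d/s) < (q*s)*(t0-k-1/2) :=
          mul_lt_mul_of_pos_left (by linarith) hqs
        have h2 : (q*s)*(1/2-d/s) = -(q*(d-1/2*s)) := by linear_combination (-q)*hdvs
        linarith
      have hdyb : |y - q/2*(((m0:ℝ)+1)+2*(k:ℝ))*s| < q*(d-1/2*s) := by
        rw [hdy, abs_lt]; constructor <;> linarith
      have hdneg : d - 3/2*s < 0 := by linarith
      have habs : |d - 3/2*s| = 3/2*s - d := by rw [_root_.abs_of_neg hdneg]; ring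
      have hstrict : q*(d-1/2*s) < q/2*s := by nlinarith
      refine ⟨m0+1, k, ?_, ?_, ?_, ?_, ?_⟩ <;> push_cast
      · rw [hdx, habs]
        have h3 : q*(3/2*s-d) + q*(d-1/2*s) = q*s := by ring
        linarith [hdyb]
      · linarith [hdyb]
      · rw [hdx, abs_lt]; constructor <;> linarith
      · intro he
        exfalso
        rw [he] at hdyb
        rw [abs_neg, _root_.abs_of_pos (by positivity : (0:ℝ) < q/2*s)] at hdyb
        linarith
      · intro he
        exfalso
        rw [he] at hdyb
        rw [_root_.abs_of_pos (by positivity : (0:ℝ) < q/2*s)] at hdyb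
        linarith



set_option maxHeartbeats 1600000 in
lemma hex_index_bounds (K : ℕ) (hK : 1 ≤ K) (s x y : ℝ) (hs : 0 < s)
    (hball : x^2 + y^2 ≤ ((3*K-1)*s)^2)
    (m n : ℤ)
    (hi : Real.sqrt 3 * |x - 3/2*m*s| + |y - Real.sqrt 3/2*(m+2*n)*s| ≤ Real.sqrt 3 * s)
    (hii : |y - Real.sqrt 3/2*(m+2*n)*s| ≤ Real.sqrt 3/2*s)
    (hiii : |x - 3/2*m*s| < s)
    (hneg : y - Real.sqrt 3/2*(m+2*n)*s = -(Real.sqrt 3/2*s) → n ≤ 0)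
    (hpos : y - Real.sqrt 3/2*(m+2*n)*s = Real.sqrt 3/2*s → 0 ≤ n) :
    |m| ≤ 2*(K:ℤ)-1 ∧ |n| ≤ 2*(K:ℤ)-1 ∧ |m+n| ≤ 2*(K:ℤ)-1 := by
  have hq : Real.sqrt 3 * Real.sqrt 3 = 3 := Real.mul_self_sqrt (by norm_num)
  have hqpos : (0:ℝ) < Real.sqrt 3 := Real.sqrt_pos.2 (by norm_num)
  set q : ℝ := Real.sqrt 3 with hqdef
  set dx : ℝ := x - 3/2*m*s with hdxdef
  set dy : ℝ := y - q/2*(m+2*n)*s with hdydef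
  clear_value dx
  clear_value dy
  have hKr : (1:ℝ) ≤ (K:ℝ) := by exact_mod_cast hK
  have hrpos : (0:ℝ) < (3*K-1)*s := by nlinarith
  have hdx1 : -s < dx := (abs_lt.mp hiii).1
  have hdx2 : dx < s := (abs_lt.mp hiii).2
  have hdy1 : -(q/2*s) ≤ dy := (abs_le.mp hii).1
  have hdy2 : dy ≤ q/2*s := (abs_le.mp hii).2
  have hqdx1 : q*dx - dy ≤ q*s := by
    have h1 : q*dx ≤ q*|dx| := mul_le_mul_of_nonneg_left (le_abs_self dx) hqpos.le
    linarith [neg_le_abs dy]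
  have hqdx2 : -(q*dx) - dy ≤ q*s := by
    have h1 : -(q*dx) ≤ q*|dx| := by
      have := mul_le_mul_of_nonneg_left (neg_abs_le dx) hqpos.le
      linarith
    linarith [neg_le_abs dy]
  have hqdx3 : q*dx + dy ≤ q*s := by
    have h1 : q*dx ≤ q*|dx| := mul_le_mul_of_nonneg_left (le_abs_self dx) hqpos.le
    linarith [le_abs_self dy]
  have hqdx4 : -(q*dx) + dy ≤ q*s := by
    have h1 : -(q*dx) ≤ q*|dx| := by
      have := mul_le_mul_of_nonneg_left (neg_abs_le dx) hqpos.le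
      linarith
    linarith [le_abs_self dy]
  have hx : |x| ≤ (3*K-1)*s := by
    rw [abs_le]; constructor <;> nlinarith
  have hxl := (abs_le.mp hx).1
  have hxu := (abs_le.mp hx).2
  have hp1 : |q*y - x| ≤ 2*((3*K-1)*s) := by
    rw [abs_le]
    constructor <;>
      nlinarith [sq_nonneg (y + q*x), sq_nonneg (y - q*x), hball, hrpos, hq,
        sq_nonneg (q*y - x + 2*((3*K-1)*s)), sq_nonneg (q*y - x - 2*((3*K-1)*s))]
  have hp2 : |x + q*y| ≤ 2*((3*K-1)*s) := by
    rw [abs_le]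
    constructor <;>
      nlinarith [sq_nonneg (y + q*x), sq_nonneg (y - q*x), hball, hrpos, hq,
        sq_nonneg (x + q*y + 2*((3*K-1)*s)), sq_nonneg (x + q*y - 2*((3*K-1)*s))]
  have hp1l := (abs_le.mp hp1).1
  have hp1u := (abs_le.mp hp1).2
  have hp2l := (abs_le.mp hp2).1
  have hp2u := (abs_le.mp hp2).2
  -- m bound
  have hmr : 3/2*(m:ℝ)*s = x - dx := by rw [hdxdef]; ring
  have hm1 : (m:ℝ) < 2*(K:ℝ) := by nlinarith [hs]
  have hm2 : -(2*(K:ℝ)) < (m:ℝ) := by nlinarith [hs]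
  have hmZ : |m| ≤ 2*(K:ℤ)-1 := by
    have h1 : m < 2*(K:ℤ) := by exact_mod_cast hm1
    have h2 : -(2*(K:ℤ)) < m := by exact_mod_cast hm2
    rw [abs_le]; omega
  -- keys
  have key : 3*(n:ℝ)*s = q*y - x - q*dy + dx := by
    linear_combination q*hdydef - hdxdef - (((m:ℝ)+2*(n:ℝ))*s/2)*hq
  have key2 : 3*((m:ℝ)+(n:ℝ))*s = x + q*y - dx - q*dy := by
    linear_combination q*hdydef + hdxdef - (((m:ℝ)+2*(n:ℝ))*s/2)*hq
  have t3 : q*(q*s) = 3*s := by linear_combination s*hq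
  have hnZ : |n| ≤ 2*(K:ℤ)-1 := by
    rw [abs_le]
    constructor
    · -- -(2K-1) ≤ n
      by_contra hcon
      push_neg at hcon
      have hcon' : n ≤ -(2*(K:ℤ)) := by omega
      have hcr : (n:ℝ) ≤ -(2*(K:ℝ)) := by exact_mod_cast hcon'
      have h6 : q*dy - dx ≥ 2*s := by nlinarith [hs]
      have t1 := mul_le_mul_of_nonneg_left hqdx4 hqpos.le
      have t2 : q*(-(q*dx) + dy) = -(3*dx) + q*dy := by linear_combination (-dx)*hq
      have e2 : -(3*dx) + q*dy ≤ 3*s := by linarith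
      have hdxhalf : -(s/2) ≤ dx := by linarith
      have t4 : q*(q/2*s) = (3/2)*s := by linear_combination (s/2)*hq
      have h5 : q*(q/2*s) ≤ q*dy := by linarith
      have h7 : q/2*s ≤ dy := le_of_mul_le_mul_left h5 hqpos
      have h8 : dy = q/2*s := le_antisymm hdy2 h7
      have := hpos h8
      omega
    · -- n ≤ 2K-1
      by_contra hcon
      push_neg at hcon
      have hcon' : (2*(K:ℤ)) ≤ n := by omega
      have hcr : 2*(K:ℝ) ≤ (n:ℝ) := by exact_mod_cast hcon'
      have h6 : dx - q*dy ≥ 2*s := by nlinarith [hs]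
      have t1 := mul_le_mul_of_nonneg_left hqdx1 hqpos.le
      have t2 : q*(q*dx - dy) = 3*dx - q*dy := by linear_combination dx*hq
      have e2 : 3*dx - q*dy ≤ 3*s := by linarith
      have hdxhalf : dx ≤ s/2 := by linarith
      have t4 : q*(-(q/2*s)) = -(3/2)*s := by linear_combination (-(s/2))*hq
      have h5 : q*dy ≤ q*(-(q/2*s)) := by linarith
      have h7 : dy ≤ -(q/2*s) := le_of_mul_le_mul_left h5 hqpos
      have h8 : dy = -(q/2*s) := le_antisymm h7 hdy1
      have := hneg h8
      omega
  refine ⟨hmZ, hnZ, ?_⟩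
  rw [abs_le]
  constructor
  · -- -(2K-1) ≤ m+n
    by_contra hcon
    push_neg at hcon
    have hcon' : m+n ≤ -(2*(K:ℤ)) := by omega
    have hcr : ((m:ℝ)+(n:ℝ)) ≤ -(2*(K:ℝ)) := by exact_mod_cast hcon'
    have h6 : dx + q*dy ≥ 2*s := by nlinarith [hs]
    have t1 := mul_le_mul_of_nonneg_left hqdx3 hqpos.le
    have t2 : q*(q*dx + dy) = 3*dx + q*dy := by linear_combination dx*hq
    have e2 : 3*dx + q*dy ≤ 3*s := by linarith
    have hdxhalf : dx ≤ s/2 := by linarith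
    have t4 : q*(q/2*s) = (3/2)*s := by linear_combination (s/2)*hq
    have h5 : q*(q/2*s) ≤ q*dy := by linarith
    have h7 : q/2*s ≤ dy := le_of_mul_le_mul_left h5 hqpos
    have h8 : dy = q/2*s := le_antisymm hdy2 h7
    have hn0 := hpos h8
    have : m ≤ -(2*(K:ℤ)) := by omega
    rw [abs_le] at hmZ
    omega
  · -- m+n ≤ 2K-1
    by_contra hcon
    push_neg at hcon
    have hcon' : (2*(K:ℤ)) ≤ m+n := by omega
    have hcr : 2*(K:ℝ) ≤ ((m:ℝ)+(n:ℝ)) := by exact_mod_cast hcon'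
    have h6 : dx + q*dy ≤ -(2*s) := by nlinarith [hs]
    have t1 := mul_le_mul_of_nonneg_left hqdx2 hqpos.le
    have t2 : q*(-(q*dx) - dy) = -(3*dx) - q*dy := by linear_combination (-dx)*hq
    have e2 : -(3*dx) - q*dy ≤ 3*s := by linarith
    have hdxhalf : -(s/2) ≤ dx := by linarith
    have t4 : q*(-(q/2*s)) = -(3/2)*s := by linear_combination (-(s/2))*hq
    have h5 : q*dy ≤ q*(-(q/2*s)) := by linarith
    have h7 : dy ≤ -(q/2*s) := le_of_mul_le_mul_left h5 hqpos
    have h8 : dy = -(q/2*s) := le_antisymm h7 hdy1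
    have hn0 := hneg h8
    have : (2*(K:ℤ)) ≤ m := by omega
    rw [abs_le] at hmZ
    omega

noncomputable def hexCenter (s : ℝ) (p : ℤ × ℤ) : ℂ :=
  ((3/2*(p.1:ℝ)*s : ℝ) : ℂ) + ((Real.sqrt 3/2*((p.1:ℝ)+2*(p.2:ℝ))*s : ℝ) : ℂ) * Complex.I

set_option maxHeartbeats 1600000

/-- A closed disk of radius `r` can be covered by an `L`-layer hexagonal lattice of
`3 L² - 3 L + 1` regular hexagons of side length `s = 2 r / (3 L - 2)`; moreover for
even `L` the lattice of hexagons of side `s` covers the disk of radius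
`((3 L / 2) - 1) * s` about its center (its inradius is at least that). -/
theorem disk_covered_by_hexagonal_lattice (L : ℕ) (hL : 2 ≤ L) (hLeven : Even L)
    (r s : ℝ) (hr : 0 < r) (hs : s = 2 * r / (3 * L - 2)) :
    r = ((3 * (L : ℝ) / 2) - 1) * s ∧
    ∃ centers : Fin (3 * L ^ 2 - 3 * L + 1) → ℂ,
      Metric.closedBall (0 : ℂ) r ⊆ ⋃ i, regularHexagon (centers i) s := by
  have hL2 : (2:ℝ) ≤ (L:ℝ) := by exact_mod_cast hL
  have hLne : (3*(L:ℝ) - 2) ≠ 0 := by linarith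
  have hfirst : r = ((3 * (L : ℝ) / 2) - 1) * s := by
    rw [hs]; field_simp
  have hs0 : 0 < s := by
    rw [hs]; exact div_pos (by linarith) (by linarith)
  obtain ⟨K, hKL⟩ := hLeven
  have hKL' : L = 2*K := by omega
  have hK : 1 ≤ K := by omega
  have hr2 : r = (3*(K:ℝ)-1)*s := by
    rw [hfirst]
    have : (L:ℝ) = 2*(K:ℝ) := by exact_mod_cast hKL'
    rw [this]; ring
  -- cardinality
  have hcastL : ((L-1 : ℕ) : ℤ) = (L:ℤ) - 1 := by
    have : (1:ℕ) ≤ L := by omega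
    push_cast [this]
    ring
  have hcard : (hexSet ((L:ℤ)-1)).card = 3 * L ^ 2 - 3 * L + 1 := by
    rw [← hcastL, card_hexSet]
    obtain ⟨j, rfl⟩ : ∃ j, L = j + 2 := ⟨L - 2, by omega⟩
    have h2 : (j + 2 - 1) = j + 1 := by omega
    rw [h2]
    have h1 : (j+2)^2 = j*j + 4*j + 4 := by ring
    have h4 : 3*(j+1)*(j+1) = 3*(j*j) + 6*j + 3 := by ring
    omega
  refine ⟨hfirst, ?_⟩
  refine ⟨fun i => hexCenter s ((hexSet ((L:ℤ)-1)).equivFin.symm (Fin.cast hcard.symm i) : ℤ×ℤ), ?_⟩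
  intro z hz
  have hzr : ‖z‖ ≤ r := by
    simpa [Complex.dist_eq] using Metric.mem_closedBall.mp hz
  set x : ℝ := z.re with hxdef
  set y : ℝ := z.im with hydef
  have hball : x^2 + y^2 ≤ ((3*(K:ℝ)-1)*s)^2 := by
    have h1 : ‖z‖^2 = x^2 + y^2 := by
      rw [Complex.sq_norm, Complex.normSq_apply]; ring
    nlinarith [norm_nonneg z]
  obtain ⟨m, n, hi, hii, hiii, hnegc, hposc⟩ := exists_lattice_point s hs0 x y
  obtain ⟨hm, hn, hmn⟩ := hex_index_bounds K hK s x y hs0 hball m n hi hii hiii hnegc hposc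
  have hLK : (L:ℤ) - 1 = 2*(K:ℤ) - 1 := by
    have : (L:ℤ) = 2*(K:ℤ) := by exact_mod_cast hKL'
    omega
  have hmem : (m, n) ∈ hexSet ((L:ℤ)-1) := by
    rw [hLK]
    exact mem_hexSet hm hn hmn
  set j := (hexSet ((L:ℤ)-1)).equivFin ⟨(m,n), hmem⟩ with hjdef
  refine Set.mem_iUnion.2 ⟨Fin.cast hcard j, ?_⟩
  have hback : (hexSet ((L:ℤ)-1)).equivFin.symm (Fin.cast hcard.symm (Fin.cast hcard j))
      = ⟨(m,n), hmem⟩ := by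
    have : Fin.cast hcard.symm (Fin.cast hcard j) = j := by
      apply Fin.ext; simp
    rw [this, hjdef, Equiv.symm_apply_apply]
  show z ∈ regularHexagon (hexCenter s
    (((hexSet ((L:ℤ)-1)).equivFin.symm (Fin.cast hcard.symm (Fin.cast hcard j)) : ℤ×ℤ))) s
  rw [hback]
  have hre : (z - hexCenter s (m,n)).re = x - 3/2*(m:ℝ)*s := by
    simp [hexCenter, Complex.sub_re, Complex.add_re, Complex.mul_re, Complex.I_re, Complex.I_im,
      Complex.ofReal_re, Complex.ofReal_im, hxdef]
  have him : (z - hexCenter s (m,n)).im = y - Real.sqrt 3/2*((m:ℝ)+2*(n:ℝ))*s := by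
    simp [hexCenter, Complex.sub_im, Complex.add_im, Complex.mul_im, Complex.I_re, Complex.I_im,
      Complex.ofReal_re, Complex.ofReal_im, hydef]
  refine mem_regularHexagon hs0 (hexCenter s (m,n)) z ?_ ?_
  · rw [hre, him]; exact_mod_cast hi
  · rw [him]; exact_mod_cast hii
end

section
/- In the doubling strategy for finding all k POIs, the total distance traveled is at most d·n + 2d·E, where E = ∑_{i=1}^{k−1} e_i: the first search travels at most d·n, and the i-th subsequent search occurs in an area of radius 2^{⌈log₂ e_i⌉} < 2e_i, costing at most d·2^{⌈log₂ e_i⌉} ≤ 2d·e_i distance. -/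
open Real Finset

lemma pow_ceil_logb_lt (x : ℝ) (hx : 1 ≤ x) :
    (2 : ℝ) ^ (⌈Real.logb 2 x⌉ : ℤ) < 2 * x := by
  have hx0 : 0 < x := lt_of_lt_of_le one_pos hx
  have h1 : ((2 : ℝ) ^ (⌈Real.logb 2 x⌉ : ℤ)) = (2 : ℝ) ^ ((⌈Real.logb 2 x⌉ : ℤ) : ℝ) := by
    rw [Real.rpow_intCast]
  rw [h1]
  have h2 : ((⌈Real.logb 2 x⌉ : ℤ) : ℝ) < Real.logb 2 x + 1 := by
    exact_mod_cast Int.ceil_lt_add_one _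
  calc (2 : ℝ) ^ ((⌈Real.logb 2 x⌉ : ℤ) : ℝ) < 2 ^ (Real.logb 2 x + 1) :=
        Real.rpow_lt_rpow_left_iff one_lt_two |>.mpr h2
    _ = 2 ^ Real.logb 2 x * 2 := by rw [Real.rpow_add two_pos, Real.rpow_one]
    _ = 2 * x := by rw [Real.rpow_logb two_pos (by norm_num) hx0]; ring

/-- Distance traveled by the doubling strategy: if the single-POI search travels at
most `d r` in a radius-`r` area, the first search travels at most `d n` and the
`i`-th subsequent search occurs in an area of radius `2^{⌈log₂ eᵢ⌉} < 2 eᵢ`, so the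
total distance is at most `d n + 2 d E` with `E = ∑ eᵢ`. -/
theorem doubling_strategy_distance_bound (d n : ℝ) (hd : 0 ≤ d) (hn : 1 ≤ n)
    (k : ℕ) (hk : 1 ≤ k) (e : Fin (k - 1) → ℝ) (he : ∀ i, 1 ≤ e i) :
    (∀ i, (2 : ℝ) ^ (⌈Real.logb 2 (e i)⌉ : ℤ) < 2 * e i) ∧
    d * n + ∑ i, d * (2 : ℝ) ^ (⌈Real.logb 2 (e i)⌉ : ℤ)
      ≤ d * n + 2 * d * ∑ i, e i := by
  refine ⟨fun i => pow_ceil_logb_lt _ (he i), ?_⟩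
  have : ∑ i, d * (2 : ℝ) ^ (⌈Real.logb 2 (e i)⌉ : ℤ) ≤ ∑ i, 2 * d * e i := by
    apply Finset.sum_le_sum
    intro i _
    calc d * (2 : ℝ) ^ (⌈Real.logb 2 (e i)⌉ : ℤ) ≤ d * (2 * e i) :=
          mul_le_mul_of_nonneg_left (le_of_lt (pow_ceil_logb_lt _ (he i))) hd
      _ = 2 * d * e i := by ring
  rw [Finset.mul_sum]
  linarith
end
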